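/- Let F be a free group and R, S normal subgroups of F. Then the quotient group F/γ₂(R∩S) is torsion-free, where γ₂(R∩S) = [R∩S, R∩S] is the derived subgroup of R∩S. -/

import Mathlib

open Finsupp

namespace Stmt19Aux


/-- In a free group, if a power lies in the commutator subgroup, so does the element. -/
lemma pow_mem_commutator {K : Type*} [Group K] [IsFreeGroup K] {k : K} {n : ℕ}
    (hn : n ≠ 0) (h : k ^ n ∈ commutator K) : k ∈ commutator K := by
  classical
  set h0 : K →* Multiplicative (IsFreeGroup.Generators K →₀ ℤ) :=
    IsFreeGroup.lift (fun i => Multiplicative.ofAdd (Finsupp.single i 1)) with hh0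
  have hk1 : h0 k = 1 := by
    have hk : h0 (k ^ n) = 1 := Abelianization.commutator_subset_ker h0 h
    rw [map_pow] at hk
    have h2 : n • (Multiplicative.toAdd (h0 k)) = 0 := by
      have := congrArg Multiplicative.toAdd hk
      simpa using this
    have h3 : Multiplicative.toAdd (h0 k) = 0 := by
      ext a
      have := congrArg (fun z : IsFreeGroup.Generators K →₀ ℤ => z a) h2
      simp only [Finsupp.smul_apply, Finsupp.coe_zero, Pi.zero_apply, nsmul_eq_mul] at this
      rcases mul_eq_zero.mp this with h | h
      · exact absurd (by exact_mod_cast h) hn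
      · exact h
    have : h0 k = Multiplicative.ofAdd 0 := by
      rw [← h3]; rfl
    simpa using this
  -- retraction to the abelianization
  set r0 : (IsFreeGroup.Generators K →₀ ℤ) →+ Additive (Abelianization K) :=
    Finsupp.liftAddHom
      (fun i => zmultiplesHom _ (Additive.ofMul (Abelianization.of (IsFreeGroup.of i)))) with hr0
  set r : Multiplicative (IsFreeGroup.Generators K →₀ ℤ) →* Abelianization K :=
    AddMonoidHom.toMultiplicativeLeft r0 with hr
  have hcomp : r.comp h0 = Abelianization.of := by
    apply IsFreeGroup.ext_hom
    intro a
    simp [hh0, hr, hr0]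
  have hof : Abelianization.of k = 1 := by
    rw [← hcomp]
    simp [hk1]
  exact (QuotientGroup.eq_one_iff k).mp hof



variable (ι : Type) (Q : Type) [Group Q]

/-- Left multiplication by a group element on the free module over the group ring,
as an additive equivalence. -/
noncomputable def smulAddEquiv (g : Q) : (ι →₀ MonoidAlgebra ℤ Q) ≃+ (ι →₀ MonoidAlgebra ℤ Q) where
  toFun a := MonoidAlgebra.of ℤ Q g • a
  invFun a := MonoidAlgebra.of ℤ Q g⁻¹ • a
  left_inv a := by
    show MonoidAlgebra.of ℤ Q g⁻¹ • MonoidAlgebra.of ℤ Q g • a = a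
    rw [← mul_smul, ← map_mul, inv_mul_cancel, map_one, one_smul]
  right_inv a := by
    show MonoidAlgebra.of ℤ Q g • MonoidAlgebra.of ℤ Q g⁻¹ • a = a
    rw [← mul_smul, ← map_mul, mul_inv_cancel, map_one, one_smul]
  map_add' a b := smul_add _ a b

/-- The action of `Q` on the (multiplicative version of the) free module over its group
ring, as a homomorphism into the automorphism group. -/
noncomputable def phi : Q →* MulAut (Multiplicative (ι →₀ MonoidAlgebra ℤ Q)) where
  toFun g := AddEquiv.toMultiplicative (smulAddEquiv ι Q g)
  map_one' := by
    ext1 a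
    show Multiplicative.ofAdd (MonoidAlgebra.of ℤ Q 1 • Multiplicative.toAdd a) = a
    rw [map_one, one_smul]
    rfl
  map_mul' g h := by
    ext1 a
    show Multiplicative.ofAdd (MonoidAlgebra.of ℤ Q (g * h) • Multiplicative.toAdd a)
      = Multiplicative.ofAdd (MonoidAlgebra.of ℤ Q g •
          Multiplicative.toAdd (Multiplicative.ofAdd (MonoidAlgebra.of ℤ Q h • Multiplicative.toAdd a)))
    rw [map_mul, mul_smul]
    rfl

lemma phi_apply (g : Q) (a : Multiplicative (ι →₀ MonoidAlgebra ℤ Q)) :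
    Multiplicative.toAdd (phi ι Q g a) = MonoidAlgebra.of ℤ Q g • Multiplicative.toAdd a := rfl

variable (X : ι → Q)

/-- The "Fox derivative evaluation" map. -/
noncomputable def theta : (ι →₀ MonoidAlgebra ℤ Q) →+ MonoidAlgebra ℤ Q :=
  Finsupp.liftAddHom (fun i => AddMonoidHom.mulRight (MonoidAlgebra.of ℤ Q (X i) - 1))

lemma theta_single (i : ι) (r : MonoidAlgebra ℤ Q) :
    theta ι Q X (Finsupp.single i r) = r * (MonoidAlgebra.of ℤ Q (X i) - 1) := by
  simp [theta]

lemma theta_smul (c : MonoidAlgebra ℤ Q) (a : ι →₀ MonoidAlgebra ℤ Q) :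
    theta ι Q X (c • a) = c * theta ι Q X a := by
  induction a using Finsupp.induction with
  | zero => simp
  | single_add i r a _ _ ih =>
    rw [smul_add, map_add, map_add, smul_single, smul_eq_mul, theta_single, theta_single, ih,
      mul_add, mul_assoc]

/-- The subgroup of the semidirect product cut out by the Fox fundamental identity. -/
noncomputable def T : Subgroup (Multiplicative (ι →₀ MonoidAlgebra ℤ Q) ⋊[phi ι Q] Q) where
  carrier := {m | theta ι Q X (Multiplicative.toAdd m.left) = MonoidAlgebra.of ℤ Q m.right - 1}
  one_mem' := by
    show theta ι Q X (Multiplicative.toAdd (1 : Multiplicative _)) = _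
    simp [← MonoidAlgebra.one_def]
  mul_mem' := by
    rintro a b ha hb
    show theta ι Q X (Multiplicative.toAdd ((a * b).left)) = _
    rw [SemidirectProduct.mul_left]
    show theta ι Q X (Multiplicative.toAdd a.left + Multiplicative.toAdd (phi ι Q a.right b.left))
      = _
    rw [map_add, phi_apply, theta_smul, ha, hb, SemidirectProduct.mul_right, map_mul]
    noncomm_ring
  inv_mem' := by
    rintro a ha
    show theta ι Q X (Multiplicative.toAdd (a⁻¹.left)) = _
    rw [SemidirectProduct.inv_left, SemidirectProduct.inv_right]
    show theta ι Q X (MonoidAlgebra.of ℤ Q a.right⁻¹ • Multiplicative.toAdd a.left⁻¹) = _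
    have : Multiplicative.toAdd (a.left⁻¹) = -Multiplicative.toAdd a.left := rfl
    rw [this, smul_neg, map_neg, theta_smul, ha]
    have hunit : MonoidAlgebra.of ℤ Q a.right⁻¹ * MonoidAlgebra.of ℤ Q a.right = 1 := by
      rw [← map_mul, inv_mul_cancel, map_one]
    rw [mul_sub, hunit, mul_one, neg_sub]



variable {Q : Type} [Group Q]

/-- The setoid of left `⟨g⟩`-orbits (right cosets of `⟨g⟩`). -/
def orbSetoid (g : Q) : Setoid Q where
  r t t' := ∃ i : ℤ, t' = g ^ i * t
  iseqv := ⟨fun t => ⟨0, by simp⟩,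
    fun {t t'} h => by
      obtain ⟨i, hi⟩ := h
      exact ⟨-i, by rw [hi, ← mul_assoc, ← zpow_add, neg_add_cancel, zpow_zero, one_mul]⟩,
    fun {a b c} h1 h2 => by
      obtain ⟨i, hi⟩ := h1
      obtain ⟨j, hj⟩ := h2
      exact ⟨j + i, by rw [hj, hi, ← mul_assoc, ← zpow_add]⟩⟩

lemma of_mul_eq_mapDomain (u : Q) (x : MonoidAlgebra ℤ Q) :
    (MonoidAlgebra.of ℤ Q u * x).coeff = Finsupp.mapDomain (fun t => u * t) x.coeff := by
  rw [MonoidAlgebra.of_apply, MonoidAlgebra.mul_def, MonoidAlgebra.coeff_single,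
    Finsupp.sum_single_index]
  · simp [Finsupp.mapDomain, MonoidAlgebra.coeff_finsuppSum, MonoidAlgebra.coeff_single]
  · simp

lemma mul_of_eq_sum (x : MonoidAlgebra ℤ Q) (v : Q) :
    x * MonoidAlgebra.of ℤ Q v = x.coeff.sum fun t r => MonoidAlgebra.single (t * v) r := by
  rw [MonoidAlgebra.of_apply, MonoidAlgebra.mul_def]
  apply Finsupp.sum_congr
  intro t _
  rw [MonoidAlgebra.coeff_single, Finsupp.sum_single_index] <;> simp

theorem key {ι : Type} (g : Q) (hm : 1 < orderOf g)
    (a : ι →₀ MonoidAlgebra ℤ Q) (X : ι → Q)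
    (hσ : (∑ i ∈ Finset.range (orderOf g), (MonoidAlgebra.of ℤ Q g) ^ i) • a = 0)
    (hid : a.sum (fun i r => r * (MonoidAlgebra.of ℤ Q (X i) - 1))
      = MonoidAlgebra.of ℤ Q g - 1) : False := by
  classical
  set m := orderOf g with hmdef
  set σ : MonoidAlgebra ℤ Q := ∑ i ∈ Finset.range m, (MonoidAlgebra.of ℤ Q g) ^ i with hσdef
  letI sd : Setoid Q := orbSetoid g
  -- the weight function
  have hspec : ∀ t : Q, ∃ i : ℤ, t = g ^ i * (⟦t⟧ : Quotient sd).out :=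
    fun t => Quotient.mk_out t
  set e : Q → ℤ := fun t => Classical.choose (hspec t) with he
  set w : Q → ZMod m := fun t => ((e t : ℤ) : ZMod m) with hwdef
  have hqmul : ∀ (i : ℤ) (t : Q), (⟦g ^ i * t⟧ : Quotient sd) = ⟦t⟧ := by
    intro i t
    apply Quotient.sound
    exact ⟨-i, by rw [← mul_assoc, ← zpow_add, neg_add_cancel, zpow_zero, one_mul]⟩
  have hw : ∀ t : Q, w (g * t) = w t + 1 := by
    intro t
    have hq : (⟦g * t⟧ : Quotient sd) = ⟦t⟧ := by
      have := hqmul 1 t; rwa [zpow_one] at this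
    have spec1 : g * t = g ^ (e (g * t)) * (⟦g * t⟧ : Quotient sd).out := Classical.choose_spec (hspec (g * t))
    have spec2 : t = g ^ (e t) * (⟦t⟧ : Quotient sd).out := Classical.choose_spec (hspec t)
    rw [hq] at spec1
    have heq : g ^ (e (g * t)) = g ^ (e t + 1) := by
      apply mul_right_cancel (b := (⟦t⟧ : Quotient sd).out)
      rw [← spec1, add_comm, zpow_add, zpow_one, mul_assoc, ← spec2]
    have hdvd : ((m : ℤ)) ∣ e (g * t) - (e t + 1) := by
      rw [hmdef]
      apply orderOf_dvd_iff_zpow_eq_one.mpr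
      rw [zpow_sub, heq, mul_inv_cancel]
    have := (ZMod.intCast_eq_intCast_iff_dvd_sub (e t + 1) (e (g * t)) m).mpr
      (by simpa using hdvd)
    rw [hwdef]
    push_cast at this ⊢
    rw [← this]
  have hwz : ∀ (i : ℤ) (t : Q), w (g ^ i * t) = w t + (i : ZMod m) := by
    intro i
    induction i using Int.induction_on with
    | zero => intro t; simp
    | succ j ih =>
      intro t
      have h1 : g ^ ((j : ℤ) + 1) * t = g * (g ^ (j : ℤ) * t) := by
        rw [add_comm, zpow_add, zpow_one, mul_assoc]
      rw [h1, hw, ih]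
      push_cast
      ring
    | pred j ih =>
      intro t
      have h1 : g * (g ^ (-(j : ℤ) - 1) * t) = g ^ (-(j : ℤ)) * t := by
        rw [← mul_assoc, ← zpow_one_add]
        congr 2
        ring
      have hthis := hw (g ^ (-(j : ℤ) - 1) * t)
      rw [h1, ih] at hthis
      have h2 : w (g ^ (-(j : ℤ) - 1) * t) = w t + ((-(j:ℤ) : ℤ) : ZMod m) - 1 :=
        eq_sub_of_add_eq hthis.symm
      rw [h2]
      push_cast
      ring
  -- claim0 : right multiples of kernel elements of σ are killed by invariant weights
  have claim0 : ∀ x : MonoidAlgebra ℤ Q, σ * x = 0 → ∀ h : Q → ZMod m, (∀ t, h (g * t) = h t) →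
      (x.coeff.sum fun t r => (r : ZMod m) * h t) = 0 := by
    intro x hx h hh
    have hhz : ∀ (i : ℤ) (t : Q), h (g ^ i * t) = h t := by
      intro i
      induction i using Int.induction_on with
      | zero => intro t; simp
      | succ j ih =>
        intro t
        have h1 : g ^ ((j : ℤ) + 1) * t = g * (g ^ (j : ℤ) * t) := by
          rw [add_comm, zpow_add, zpow_one, mul_assoc]
        rw [h1, hh, ih]
      | pred j ih =>
        intro t
        have h1 : g * (g ^ (-(j : ℤ) - 1) * t) = g ^ (-(j : ℤ)) * t := by
          rw [← mul_assoc, ← zpow_one_add]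
          congr 2
          ring
        have h2 := hh (g ^ (-(j : ℤ) - 1) * t)
        rw [h1, ih] at h2
        exact h2.symm
    have hbar_wd : ∀ a b : Q, sd.r a b → h a = h b := by
      rintro a b ⟨i, rfl⟩
      exact (hhz i a).symm
    set hbar : Quotient sd → ZMod m := Quotient.lift h hbar_wd with hbardef
    set p : Q → Quotient sd := fun t => ⟦t⟧ with hpdef
    have hmapj : ∀ j : ℕ,
        Finsupp.mapDomain p ((MonoidAlgebra.of ℤ Q g) ^ j * x).coeff = Finsupp.mapDomain p x.coeff := by
      intro j
      rw [← map_pow, of_mul_eq_mapDomain, ← Finsupp.mapDomain_comp]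
      congr 1
      funext t
      show (⟦g ^ j * t⟧ : Quotient sd) = ⟦t⟧
      have := hqmul (j : ℤ) t
      rwa [zpow_natCast] at this
    have hms : m • Finsupp.mapDomain p x.coeff = 0 := by
      have h5 : Finsupp.mapDomain p (σ * x).coeff = m • Finsupp.mapDomain p x.coeff := by
        rw [hσdef, Finset.sum_mul, MonoidAlgebra.coeff_sum, Finsupp.mapDomain_finset_sum,
          Finset.sum_congr rfl (fun j _ => hmapj j), Finset.sum_const, Finset.card_range]
      rw [hx] at h5
      rw [← h5, MonoidAlgebra.coeff_zero, Finsupp.mapDomain_zero]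
    have hy0 : Finsupp.mapDomain p x.coeff = 0 := by
      ext q
      have h6 := congrArg (fun z : Quotient sd →₀ ℤ => z q) hms
      simp only [Finsupp.smul_apply, Finsupp.coe_zero, Pi.zero_apply, smul_eq_mul,
        nsmul_eq_mul] at h6
      rcases mul_eq_zero.mp h6 with h7 | h7
      · exact absurd (by exact_mod_cast h7) (by omega : (m : ℕ) ≠ 0)
      · simpa using h7
    have hsum : (x.coeff.sum fun t r => (r : ZMod m) * h t)
        = (Finsupp.mapDomain p x.coeff).sum fun o r => (r : ZMod m) * hbar o := by
      rw [Finsupp.sum_mapDomain_index]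
      · rfl
      · intro b; simp
      · intro b r s; push_cast; ring
    rw [hsum, hy0, Finsupp.sum_zero_index]
  -- the weighted augmentation
  set μ : MonoidAlgebra ℤ Q →+ ZMod m := Finsupp.liftAddHom
    (fun t => (AddMonoidHom.mulRight (w t)).comp (Int.castAddHom (ZMod m))) |>.comp
      MonoidAlgebra.coeffAddEquiv.toAddMonoidHom with hμdef
  have mu_single : ∀ (t : Q) (r : ℤ), μ (MonoidAlgebra.single t r) = (r : ZMod m) * w t := by
    intro t r
    exact Finsupp.liftAddHom_apply_single _ t r
  have mu_apply : ∀ x : MonoidAlgebra ℤ Q, μ x = x.coeff.sum fun t r => (r : ZMod m) * w t :=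
    fun x => rfl
  have claim1 : ∀ x : MonoidAlgebra ℤ Q, σ * x = 0 → ∀ v : Q,
      μ (x * MonoidAlgebra.of ℤ Q v) = μ x := by
    intro x hx v
    have h1 : μ (x * MonoidAlgebra.of ℤ Q v) = x.coeff.sum fun t r => (r : ZMod m) * w (t * v) := by
      rw [mul_of_eq_sum, map_finsuppSum]
      exact Finsupp.sum_congr fun t _ => mu_single (t * v) (x.coeff t)
    have h3 : μ (x * MonoidAlgebra.of ℤ Q v) - μ x
        = x.coeff.sum fun t r => (r : ZMod m) * (w (t * v) - w t) := by
      rw [h1, mu_apply, ← Finsupp.sum_sub]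
      exact Finsupp.sum_congr fun t _ => (mul_sub _ _ _).symm
    have h4 : (x.coeff.sum fun t r => (r : ZMod m) * (w (t * v) - w t)) = 0 := by
      apply claim0 x hx
      intro t
      have h5 : w ((g * t) * v) = w (t * v) + 1 := by
        rw [mul_assoc]
        exact hw (t * v)
      rw [h5, hw t]
      ring
    rw [h4] at h3
    exact sub_eq_zero.mp h3
  have hσi : ∀ i : ι, σ * a i = 0 := by
    intro i
    have h8 := congrArg (fun z : ι →₀ MonoidAlgebra ℤ Q => z i) hσ
    simpa [smul_eq_mul] using h8
  have hfinal : μ (MonoidAlgebra.of ℤ Q g - 1) = 0 := by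
    rw [← hid, map_finsuppSum]
    apply Finset.sum_eq_zero
    intro i _
    show μ (a i * (MonoidAlgebra.of ℤ Q (X i) - 1)) = 0
    rw [mul_sub, mul_one, map_sub, claim1 (a i) (hσi i) (X i), sub_self]
  have hone : μ (MonoidAlgebra.of ℤ Q g - 1) = 1 := by
    rw [map_sub, MonoidAlgebra.of_apply]
    have h1 : μ (MonoidAlgebra.single g 1) = w g := by rw [mu_single]; simp
    have h2 : μ 1 = w 1 := by
      rw [MonoidAlgebra.one_def, mu_single]
      simp
    rw [h1, h2]
    have h9 := hw 1
    rw [mul_one] at h9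
    rw [h9]
    ring
  rw [hfinal] at hone
  have h10 : ((1 : ℤ) : ZMod m) = 0 := by exact_mod_cast hone.symm
  rw [ZMod.intCast_zmod_eq_zero_iff_dvd] at h10
  have h11 := Int.le_of_dvd one_pos h10
  have : (m : ℤ) ≤ 1 := h11
  omega



theorem main_aux (F : Type) [Group F] [IsFreeGroup F] (N : Subgroup F) [N.Normal]
    (f : F) (n : ℕ) (hn : 0 < n) (hfn : f ^ n ∈ (⁅N, N⁆ : Subgroup F)) :
    f ∈ (⁅N, N⁆ : Subgroup F) := by
  classical
  have hNN_le : (⁅N, N⁆ : Subgroup F) ≤ N := by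
    rw [Subgroup.commutator_le]
    intro g₁ h₁ g₂ h₂
    rw [commutatorElement_def]
    exact mul_mem (mul_mem (mul_mem h₁ h₂) (inv_mem h₁)) (inv_mem h₂)
  set π : F →* F ⧸ N := QuotientGroup.mk' N with hπ
  by_cases hg1 : π f = 1
  · -- Case A : f ∈ N; use that N is free and its abelianization is torsion-free
    have hfN : f ∈ N := (QuotientGroup.eq_one_iff f).mp hg1
    have hmapeq : (⁅N, N⁆ : Subgroup F) = Subgroup.map N.subtype (commutator N) := by
      rw [commutator_def, Subgroup.map_commutator, ← MonoidHom.range_eq_map,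
        Subgroup.range_subtype]
    set k : N := ⟨f, hfN⟩ with hk
    have hkn : k ^ n ∈ commutator N := by
      rw [hmapeq] at hfn
      obtain ⟨k', hk', hk'eq⟩ := hfn
      have : k' = k ^ n := by
        apply Subtype.ext
        exact hk'eq
      rwa [← this]
    have hkc : k ∈ commutator N :=
      pow_mem_commutator hn.ne' hkn
    exact hmapeq ▸ ⟨k, hkc, rfl⟩
  · -- Case B : f ∉ N ; derive a contradiction
    exfalso
    set ι := IsFreeGroup.Generators F with hι
    set Q := F ⧸ N with hQ
    set Φ : F →* (Multiplicative (ι →₀ MonoidAlgebra ℤ Q) ⋊[phi ι Q] Q) :=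
      IsFreeGroup.lift
        (fun i => ⟨Multiplicative.ofAdd (Finsupp.single i 1), π (IsFreeGroup.of i)⟩) with hΦ
    set X : ι → Q := fun i => π (IsFreeGroup.of i) with hX
    have hrightf : ∀ u : F, (Φ u).right = π u := by
      have hright : (SemidirectProduct.rightHom).comp Φ = π := by
        apply IsFreeGroup.ext_hom
        intro i
        rw [MonoidHom.comp_apply, hΦ, IsFreeGroup.lift_of]
        rfl
      intro u
      exact DFunLike.congr_fun hright u
    -- every element of the image satisfies the fundamental identity
    have hTmem : ∀ u : F, Φ u ∈ T ι Q X := by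
      have hcl : Subgroup.closure (Set.range (IsFreeGroup.of : ι → F)) = ⊤ := by
        have h1 : Set.range (IsFreeGroup.of : ι → F)
            = (IsFreeGroup.mulEquiv F).toMonoidHom '' Set.range (FreeGroup.of : ι → FreeGroup ι) := by
          rw [← Set.range_comp]
          rfl
        rw [h1, ← MonoidHom.map_closure, FreeGroup.closure_range_of]
        rw [← MonoidHom.range_eq_map]
        exact MonoidHom.range_eq_top.mpr (IsFreeGroup.mulEquiv F).surjective
      intro u
      have hu : Φ u ∈ Subgroup.map Φ ⊤ := ⟨u, trivial, rfl⟩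
      rw [← hcl, MonoidHom.map_closure] at hu
      refine (Subgroup.closure_le (T ι Q X)).mpr ?_ hu
      rintro - ⟨-, ⟨i, rfl⟩, rfl⟩
      show theta ι Q X (Multiplicative.toAdd (Φ (IsFreeGroup.of i)).left)
        = MonoidAlgebra.of ℤ Q (Φ (IsFreeGroup.of i)).right - 1
      rw [hΦ, IsFreeGroup.lift_of]
      show theta ι Q X (Finsupp.single i 1) = MonoidAlgebra.of ℤ Q (π (IsFreeGroup.of i)) - 1
      rw [theta_single, one_mul, hX]
    -- the commutator subgroup of N dies under Φ
    have hker : ∀ u ∈ (⁅N, N⁆ : Subgroup F), Φ u = 1 := by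
      have hle : (⁅N, N⁆ : Subgroup F) ≤ Φ.ker := by
        rw [Subgroup.commutator_le]
        intro a ha b hb
        rw [MonoidHom.mem_ker, map_commutatorElement,
          commutatorElement_eq_one_iff_mul_comm]
        have hra : (Φ a).right = 1 := by
          rw [hrightf a]; exact (QuotientGroup.eq_one_iff a).mpr ha
        have hrb : (Φ b).right = 1 := by
          rw [hrightf b]; exact (QuotientGroup.eq_one_iff b).mpr hb
        apply SemidirectProduct.ext
        · rw [SemidirectProduct.mul_left, SemidirectProduct.mul_left, hra, hrb, map_one,
            MulAut.one_apply, MulAut.one_apply]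
          exact mul_comm _ _
        · rw [SemidirectProduct.mul_right, SemidirectProduct.mul_right, hra, hrb]
      intro u hu
      exact hle hu
    -- the image of f and its order
    set g : Q := π f with hgdef
    have hford : g ^ n = 1 := by
      rw [hgdef, ← map_pow]
      exact (QuotientGroup.eq_one_iff _).mpr (hNN_le hfn)
    have hfing : IsOfFinOrder g := isOfFinOrder_iff_pow_eq_one.mpr ⟨n, hn, hford⟩
    have hm1 : 1 < orderOf g := by
      have h0 := hfing.orderOf_pos
      have h1 : orderOf g ≠ 1 := fun h => hg1 (orderOf_eq_one_iff.mp h)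
      omega
    set aa : ι →₀ MonoidAlgebra ℤ Q := Multiplicative.toAdd (Φ f).left with haa
    -- powers in the semidirect product
    have hpow : ∀ j : ℕ, Multiplicative.toAdd ((Φ f ^ j).left)
        = ∑ i ∈ Finset.range j, ((MonoidAlgebra.of ℤ Q g) ^ i) • aa := by
      intro j
      induction j with
      | zero => simp
      | succ j ih =>
        rw [pow_succ']
        rw [SemidirectProduct.mul_left]
        show Multiplicative.toAdd (Φ f).left
            + Multiplicative.toAdd (phi ι Q (Φ f).right ((Φ f ^ j).left)) = _
        rw [phi_apply, ih, hrightf f, ← hgdef, Finset.smul_sum]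
        rw [Finset.sum_range_succ']
        rw [pow_zero, one_smul]
        rw [add_comm]
        congr 1
        apply Finset.sum_congr rfl
        intro i _
        rw [smul_smul, ← pow_succ']
    have hΦfn : Φ f ^ n = 1 := by
      rw [← map_pow]
      exact hker _ hfn
    have hσn : (∑ i ∈ Finset.range n, (MonoidAlgebra.of ℤ Q g) ^ i) • aa = 0 := by
      rw [Finset.sum_smul, ← hpow n, hΦfn]
      rfl
    -- reduce to the sum over `range (orderOf g)`
    obtain ⟨k, hk⟩ : orderOf g ∣ n := orderOf_dvd_of_pow_eq_one hford
    have hgm : (MonoidAlgebra.of ℤ Q g) ^ orderOf g = 1 := by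
      rw [← map_pow, pow_orderOf_eq_one, map_one]
    have hsum_eq : ∀ j : ℕ, (∑ i ∈ Finset.range (orderOf g * j), (MonoidAlgebra.of ℤ Q g) ^ i)
        = j • (∑ i ∈ Finset.range (orderOf g), (MonoidAlgebra.of ℤ Q g) ^ i) := by
      intro j
      induction j with
      | zero => simp
      | succ j ih =>
        rw [Nat.mul_succ, Finset.sum_range_add, ih, succ_nsmul]
        congr 1
        apply Finset.sum_congr rfl
        intro i _
        rw [pow_add, pow_mul, hgm, one_pow, one_mul]
    have hkpos : 0 < k := by
      rcases Nat.eq_zero_or_pos k with h | h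
      · rw [h, Nat.mul_zero] at hk
        omega
      · exact h
    have hσm : (∑ i ∈ Finset.range (orderOf g), (MonoidAlgebra.of ℤ Q g) ^ i) • aa = 0 := by
      rw [hk, hsum_eq k, nsmul_eq_mul, mul_smul] at hσn
      have hk0 : ((k : ℤ)) ≠ 0 := by exact_mod_cast hkpos.ne'
      ext i q
      have h12 := congrArg (fun z : ι →₀ MonoidAlgebra ℤ Q => z i) hσn
      simp only [Finsupp.smul_apply, Finsupp.coe_zero, Pi.zero_apply, smul_eq_mul] at h12
      have h13 := congrArg (fun z : MonoidAlgebra ℤ Q => z.coeff q) h12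
      simp only [MonoidAlgebra.natCast_def, MonoidAlgebra.coeff_single_one_mul,
        MonoidAlgebra.coeff_zero, Finsupp.coe_zero, Pi.zero_apply] at h13
      simp only [Finsupp.coe_zero, Pi.zero_apply, MonoidAlgebra.coeff_zero]
      rcases mul_eq_zero.mp h13 with h14 | h14
      · exact absurd h14 hk0
      · exact h14
    -- the fundamental identity for `f`
    have hid : aa.sum (fun i r => r * (MonoidAlgebra.of ℤ Q (X i) - 1))
        = MonoidAlgebra.of ℤ Q g - 1 := by
      have h14 := hTmem f
      have h15 : theta ι Q X (Multiplicative.toAdd (Φ f).left)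
          = MonoidAlgebra.of ℤ Q (Φ f).right - 1 := h14
      rw [hrightf f, ← hgdef] at h15
      exact h15
    exact key g hm1 aa X hσm hid

end Stmt19Aux

theorem stmt19 (F : Type) [Group F] [IsFreeGroup F] (R S : Subgroup F)
    [R.Normal] [S.Normal] :
    ∀ g : F ⧸ (⁅R ⊓ S, R ⊓ S⁆ : Subgroup F), g ≠ 1 → ¬IsOfFinOrder g := by
  intro x hx hfin
  obtain ⟨f, rfl⟩ := QuotientGroup.mk_surjective x
  obtain ⟨n, hn, hxn⟩ := isOfFinOrder_iff_pow_eq_one.mp hfin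
  apply hx
  rw [QuotientGroup.eq_one_iff]
  apply Stmt19Aux.main_aux F (R ⊓ S) f n hn
  rw [← QuotientGroup.eq_one_iff (f ^ n), QuotientGroup.mk_pow]
  exact hxn
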